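/- For fixed $\varepsilon_0 \in (0, 1/3)$ and $P_0 \in (0,1)$, the function $n_2(p) = \frac{-\ln(1 - P_0)}{D[(p - \varepsilon_0)/(1 + \varepsilon_0), p]}$ is bounded on the interval $(1 - 2\varepsilon_0, 1)$. -/

import Mathlib

/-- Bernoulli Kullback-Leibler divergence. -/
noncomputable def KL (x y : ℝ) : ℝ :=
  x * Real.log (x / y) + (1 - x) * Real.log ((1 - x) / (1 - y))

lemma log_le_quadratic {t : ℝ} (ht : 0 < t) (ht1 : t ≤ 1) :
    Real.log t ≤ t - 1 - (t - 1)^2 / 2 := by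
  set g : ℝ → ℝ := fun s => Real.log s - s + 1 + (s - 1)^2 / 2 with hg
  have hderiv : ∀ s : ℝ, 0 < s → HasDerivAt g ((s - 1)^2 / s) s := by
    intro s hs0
    have h1 := (((Real.hasDerivAt_log hs0.ne').sub (hasDerivAt_id s)).add_const 1).add
      ((((hasDerivAt_id s).sub_const 1).pow 2).div_const 2)
    simp only [id] at h1
    norm_num at h1
    refine h1.congr_deriv ?_
    field_simp; ring
  have key : g t ≤ g 1 := by
    have hmono : MonotoneOn g (Set.Icc t 1) := by
      apply monotoneOn_of_deriv_nonneg (convex_Icc t 1)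
      · exact fun s hs => (hderiv s (lt_of_lt_of_le ht hs.1)).continuousAt.continuousWithinAt
      · intro s hs
        rw [interior_Icc] at hs
        exact (hderiv s (ht.trans hs.1)).differentiableAt.differentiableWithinAt
      · intro s hs
        rw [interior_Icc] at hs
        have hs0 : 0 < s := ht.trans hs.1
        rw [(hderiv s hs0).deriv]
        positivity
    exact hmono (Set.mem_Icc.2 ⟨le_refl t, ht1⟩) (Set.mem_Icc.2 ⟨ht1, le_refl 1⟩) ht1
  simp only [hg, Real.log_one] at key
  nlinarith [key]

lemma KL_lower {x y : ℝ} (hx : 0 < x) (hxy : x < y) (hy : y < 1) :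
    (y - x)^2 / 2 ≤ KL x y := by
  have hx1 : x < 1 := hxy.trans hy
  have hy0 : 0 < y := hx.trans hxy
  -- first term
  have h1 : -(y - x) ≤ x * Real.log (x / y) := by
    have := Real.log_le_sub_one_of_pos (show (0:ℝ) < y / x by positivity)
    have hlog : Real.log (x / y) = - Real.log (y / x) := by
      rw [← Real.log_inv]; congr 1; field_simp
    rw [hlog]
    have : x * Real.log (y / x) ≤ x * (y / x - 1) := by
      apply mul_le_mul_of_nonneg_left this hx.le
    have hx' : x * (y / x - 1) = y - x := by field_simp
    nlinarith
  -- second term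
  have h2 : (y - x) + (y - x)^2 / 2 ≤ (1 - x) * Real.log ((1 - x) / (1 - y)) := by
    set t : ℝ := (1 - y) / (1 - x) with htdef
    have h1x : (0:ℝ) < 1 - x := by linarith
    have h1y : (0:ℝ) < 1 - y := by linarith
    have ht0 : 0 < t := by positivity
    have ht1 : t ≤ 1 := by
      rw [htdef, div_le_one h1x]; linarith
    have hq := log_le_quadratic ht0 ht1
    have hlog : Real.log ((1 - x) / (1 - y)) = - Real.log t := by
      rw [htdef, ← Real.log_inv]; congr 1; field_simp
    rw [hlog]
    have hmul : (1 - x) * (1 - t + (t - 1)^2 / 2) ≤ (1 - x) * (- Real.log t) := by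
      apply mul_le_mul_of_nonneg_left (by linarith) h1x.le
    have heq : (1 - x) * (1 - t + (t - 1)^2 / 2) = (y - x) + (y - x)^2 / (2 * (1 - x)) := by
      rw [htdef]; field_simp; ring
    have hle : (y - x)^2 / 2 ≤ (y - x)^2 / (2 * (1 - x)) := by
      apply div_le_div_of_nonneg_left (by positivity) (by positivity) (by nlinarith)
    linarith
  rw [KL]; linarith

/-- For fixed `ε₀ ∈ (0, 1/3)` and `P₀ ∈ (0,1)`, the function
`n₂(p) = -log(1 - P₀) / D[(p - ε₀)/(1 + ε₀), p]` is bounded on `(1 - 2ε₀, 1)`. -/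
theorem stmt_12 (ε₀ P₀ : ℝ) (hε₀ : ε₀ ∈ Set.Ioo (0 : ℝ) (1/3))
    (hP₀ : P₀ ∈ Set.Ioo (0 : ℝ) 1) :
    ∃ C : ℝ, ∀ p ∈ Set.Ioo (1 - 2 * ε₀) 1,
      |(-Real.log (1 - P₀)) / KL ((p - ε₀) / (1 + ε₀)) p| ≤ C := by
  obtain ⟨hε1, hε2⟩ := hε₀
  refine ⟨|(-Real.log (1 - P₀))| / (ε₀^2 / 8), ?_⟩
  intro p hp
  obtain ⟨hp1, hp2⟩ := hp
  set x : ℝ := (p - ε₀) / (1 + ε₀) with hxdef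
  have h1ε : (0:ℝ) < 1 + ε₀ := by linarith
  have hp0 : 0 < p := by linarith
  have hx0 : 0 < x := by
    apply div_pos _ h1ε; linarith
  have hxy : x < p := by
    rw [hxdef, div_lt_iff₀ h1ε]; nlinarith
  have hgap : ε₀ / 2 ≤ p - x := by
    rw [hxdef]
    have : p - (p - ε₀) / (1 + ε₀) = ε₀ * (p + 1) / (1 + ε₀) := by field_simp; ring
    rw [this, le_div_iff₀ h1ε]; nlinarith
  have hKL : ε₀^2 / 8 ≤ KL x p := by
    have := KL_lower hx0 hxy hp2
    nlinarith
  have hKLpos : 0 < KL x p := lt_of_lt_of_le (by positivity) hKL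
  rw [abs_div, abs_of_pos hKLpos]
  apply div_le_div_of_nonneg_left (abs_nonneg _) (by positivity) hKL
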